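/- There exist permutations σ₁, σ₂, σ₃ of {1, …, 30} such that σ₁ ∘ σ₂ ∘ σ₃ = id, the subgroup generated by σ₁, σ₂, σ₃ acts transitively on {1, …, 30}, and the multisets of orbit sizes of the cyclic groups generated by σ₁, σ₂, σ₃ are, respectively, {12,8,4,1,1,1,1,1,1}, {6,6,5,5,5,3}, and {19,7,4}. -/

import Mathlib

/-- The number of orbits of the cyclic group generated by a permutation `σ`
(i.e., the number of cycles of `σ`, counting fixed points as cycles of length 1). -/
noncomputable def cycleCount {α : Type*} [Finite α] (σ : Equiv.Perm α) : ℕ :=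
  Nat.card (MulAction.orbitRel.Quotient (Subgroup.zpowers σ) α)

/-- The multiset of sizes of the orbits of the cyclic group generated by a permutation `σ`
(i.e., the cycle type of `σ`, with fixed points contributing parts equal to 1). -/
noncomputable def orbitSizes {α : Type*} [Finite α] (σ : Equiv.Perm α) : Multiset ℕ :=
  letI := Fintype.ofFinite (MulAction.orbitRel.Quotient (Subgroup.zpowers σ) α)
  (Finset.univ : Finset (MulAction.orbitRel.Quotient (Subgroup.zpowers σ) α)).val.map
    fun q => Nat.card q.orbit

section Aux

variable {α : Type*} [Fintype α] [DecidableEq α]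

lemma orbit_zpowers_eq_finset (σ : Equiv.Perm α) (x : α) (m : ℕ) (hm : 0 < m)
    (hx : (σ ^ m) x = x) :
    MulAction.orbit (Subgroup.zpowers σ) x
      = ↑((Finset.range m).image fun n => (σ ^ n) x) := by
  ext y
  simp only [Finset.coe_image, Set.mem_image, Finset.mem_coe, Finset.mem_range,
    MulAction.mem_orbit_iff]
  constructor
  · rintro ⟨⟨g, hg⟩, rfl⟩
    obtain ⟨k, rfl⟩ := Subgroup.mem_zpowers_iff.mp hg
    have hmz : (m : ℤ) ≠ 0 := by exact_mod_cast hm.ne'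
    have h1 : k % (m : ℤ) < m := Int.emod_lt_of_pos k (by exact_mod_cast hm)
    have h2 : 0 ≤ k % (m : ℤ) := Int.emod_nonneg k hmz
    refine ⟨(k % m).toNat, by omega, ?_⟩
    have hfix : (σ ^ ((m : ℤ) * (k / m))) x = x := by
      rw [zpow_mul, zpow_natCast]
      exact Equiv.Perm.zpow_apply_eq_self_of_apply_eq_self hx _
    have hsplit : (σ ^ k) x = (σ ^ (k % m)) ((σ ^ ((m : ℤ) * (k / m))) x) := by
      rw [← Equiv.Perm.mul_apply, ← zpow_add]
      rw [add_comm, Int.mul_ediv_add_emod k m]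
    show _ = (⟨σ ^ k, hg⟩ : Subgroup.zpowers σ) • x
    have : (⟨σ ^ k, hg⟩ : Subgroup.zpowers σ) • x = (σ ^ k) x := rfl
    rw [this, hsplit, hfix, ← zpow_natCast, Int.toNat_of_nonneg h2]
  · rintro ⟨n, -, rfl⟩
    exact ⟨⟨σ ^ n, Subgroup.mem_zpowers_iff.mpr ⟨n, by rw [zpow_natCast]⟩⟩, rfl⟩

lemma orbitSizes_eq_of_reps (σ : Equiv.Perm α) (L : List (α × ℕ))
    (hpos : ∀ p ∈ L, 0 < p.2)
    (hfix : ∀ p ∈ L, (σ ^ p.2) p.1 = p.1)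
    (hcov : ∀ x : α, ∃ p ∈ L, x ∈ (Finset.range p.2).image fun n => (σ ^ n) p.1)
    (hdisj : L.Pairwise fun p q => q.1 ∉ (Finset.range p.2).image fun n => (σ ^ n) p.1) :
    orbitSizes σ
      = ↑(L.map fun p => ((Finset.range p.2).image fun n => (σ ^ n) p.1).card) := by
  classical
  set G := Subgroup.zpowers σ with hG
  have key : ∀ p ∈ L, MulAction.orbit G p.1
      = ↑((Finset.range p.2).image fun n => (σ ^ n) p.1) := fun p hp =>
    orbit_zpowers_eq_finset σ p.1 p.2 (hpos p hp) (hfix p hp)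
  set Q := MulAction.orbitRel.Quotient G α with hQ
  have hmkeq : ∀ a b : α, (Quotient.mk'' a : Q) = Quotient.mk'' b ↔
      a ∈ MulAction.orbit G b := by
    intro a b
    rw [Quotient.eq'']
    exact MulAction.orbitRel_apply
  have hnodup : (L.map fun p => (Quotient.mk'' p.1 : Q)).Nodup := by
    rw [List.Nodup, List.pairwise_map]
    refine hdisj.imp_of_mem ?_
    intro p q hp hq hpq h
    rw [hmkeq] at h
    obtain ⟨g, hgp⟩ := h
    apply hpq
    have : q.1 ∈ MulAction.orbit G p.1 := ⟨g⁻¹, by rw [← hgp]; simp⟩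
    rwa [key p hp] at this
  have huniv : (@Finset.univ Q (Fintype.ofFinite Q)).val
      = ↑(L.map fun p => (Quotient.mk'' p.1 : Q)) := by
    have : (@Finset.univ Q (Fintype.ofFinite Q))
        = ⟨↑(L.map fun p => (Quotient.mk'' p.1 : Q)), by exact_mod_cast hnodup⟩ := by
      apply Finset.ext
      intro q
      simp only [Finset.mem_univ, true_iff, Finset.mem_mk, Multiset.mem_coe, List.mem_map]
      induction q using Quotient.inductionOn' with
      | h x =>
        obtain ⟨p, hp, hx⟩ := hcov x
        refine ⟨p, hp, ?_⟩
        have : x ∈ MulAction.orbit G p.1 := by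
          rw [key p hp]; exact_mod_cast hx
        obtain ⟨g, hgx⟩ := this
        exact ((hmkeq p.1 x).mpr ⟨g⁻¹, by rw [← hgx]; simp⟩)
    rw [this]
  rw [orbitSizes]
  rw [huniv]
  rw [Multiset.map_coe, List.map_map]
  congr 1
  apply List.map_congr_left
  intro p hp
  simp only [Function.comp_apply]
  rw [MulAction.orbitRel.Quotient.orbit_mk, key p hp]
  rw [Nat.card_coe_set_eq, Set.ncard_coe_finset]

end Aux

section Aux2

variable {α : Type*} [Fintype α] [DecidableEq α]

lemma step_of_rotate (σ : Equiv.Perm α) (l : List α) (hl : l.map σ = l.rotate 1)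
    (i : ℕ) (h : i < l.length) :
    σ (l[i]'h) = l[(i + 1) % l.length]'(Nat.mod_lt _ (by omega)) := by
  have h1 : (l.map σ)[i]'(by simpa using h) = σ (l[i]'h) := List.getElem_map _
  have h2 := List.getElem_of_eq hl (by simpa using h)
  rw [h1] at h2
  rw [h2, List.getElem_rotate]

lemma pow_head_of_rotate (σ : Equiv.Perm α) (l : List α) (hl : l.map σ = l.rotate 1)
    (hne : 0 < l.length) (n : ℕ) :
    (σ ^ n) (l[0]'hne) = l[n % l.length]'(Nat.mod_lt _ hne) := by
  induction n with
  | zero => simp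
  | succ n ih =>
    rw [pow_succ', Equiv.Perm.mul_apply, ih, step_of_rotate σ l hl]
    congr 1
    simp [Nat.add_mod]

lemma image_pow_head (σ : Equiv.Perm α) (l : List α) (hl : l.map σ = l.rotate 1)
    (hne : 0 < l.length) :
    ((Finset.range l.length).image fun n => (σ ^ n) (l[0]'hne)) = l.toFinset := by
  ext y
  simp only [Finset.mem_image, Finset.mem_range, List.mem_toFinset]
  constructor
  · rintro ⟨n, hn, rfl⟩
    rw [pow_head_of_rotate σ l hl hne]
    exact List.getElem_mem _
  · intro hy
    obtain ⟨i, hi, rfl⟩ := List.mem_iff_getElem.mp hy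
    exact ⟨i, hi, by rw [pow_head_of_rotate σ l hl hne]; congr 1; exact Nat.mod_eq_of_lt hi⟩

lemma orbitSizes_eq_of_cycles (σ : Equiv.Perm α) (L : List (List α))
    (hne : ∀ l ∈ L, 0 < l.length)
    (hcyc : ∀ l ∈ L, l.map σ = l.rotate 1)
    (hnd : L.flatten.Nodup)
    (hcov : ∀ x : α, ∃ l ∈ L, x ∈ l) :
    orbitSizes σ = ↑(L.map List.length) := by
  classical
  have hjoin := List.nodup_flatten.mp hnd
  have hLnodup : ∀ l ∈ L, l.Nodup := hjoin.1
  have hdisj := hjoin.2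
  have hhead : ∀ l (h : l ∈ L), l[0]'(hne l h) ∈ l := fun l h => List.getElem_mem _
  rw [orbitSizes_eq_of_reps σ (L.attach.map fun l => (l.1[0]'(hne l.1 l.2), l.1.length))]
  · rw [List.map_map]
    have h1 : L.attach.map
        ((fun p => ((Finset.range p.2).image fun n => (σ ^ n) p.1).card) ∘
          fun l : {x // x ∈ L} => (l.1[0]'(hne l.1 l.2), l.1.length))
        = L.attach.map (fun l : {x // x ∈ L} => l.1.length) := by
      refine List.map_congr_left ?_
      intro l hl
      simp only [Function.comp_apply]
      rw [image_pow_head σ l.1 (hcyc l.1 l.2) (hne l.1 l.2)]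
      rw [List.card_toFinset, (hLnodup l.1 l.2).dedup]
    rw [h1]
    congr 1
    rw [show (fun l : {x // x ∈ L} => l.1.length) = List.length ∘ Subtype.val from rfl,
      ← List.map_map, List.attach_map_subtype_val]
  · intro p hp
    simp only [List.mem_map, List.mem_attach, true_and] at hp
    obtain ⟨l, rfl⟩ := hp
    exact hne l.1 l.2
  · intro p hp
    simp only [List.mem_map, List.mem_attach, true_and] at hp
    obtain ⟨l, rfl⟩ := hp
    have := pow_head_of_rotate σ l.1 (hcyc l.1 l.2) (hne l.1 l.2) l.1.length
    simpa using this
  · intro x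
    obtain ⟨l, hl, hx⟩ := hcov x
    refine ⟨(l[0]'(hne l hl), l.length), ?_, ?_⟩
    · exact List.mem_map.mpr ⟨⟨l, hl⟩, List.mem_attach _ _, rfl⟩
    · rw [image_pow_head σ l (hcyc l hl) (hne l hl)]
      simpa using hx
  · rw [List.pairwise_map]
    have : L.attach.Pairwise fun a b => a.1.Disjoint b.1 :=
      (List.pairwise_map (f := Subtype.val)).mp (by simpa using hdisj)
    refine this.imp ?_
    intro a b hab
    rw [image_pow_head σ a.1 (hcyc a.1 a.2) (hne a.1 a.2)]
    simp only [List.mem_toFinset]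
    intro hmem
    exact hab hmem (hhead b.1 b.2)

end Aux2

set_option maxRecDepth 4000

def pA : Equiv.Perm (Fin 30) :=
  List.formPerm ([0,1,2,3,4,5,6,7,8,9,10,11] : List (Fin 30)) *
  List.formPerm ([12,13,14,15,16,17,18,19] : List (Fin 30)) *
  List.formPerm ([20,21,22,23] : List (Fin 30))

def pB : Equiv.Perm (Fin 30) :=
  List.formPerm ([12,6,16,10,27,14] : List (Fin 30)) *
  List.formPerm ([0,3,17,24,29,22] : List (Fin 30)) *
  List.formPerm ([26,19,4,28,9] : List (Fin 30)) *
  List.formPerm ([23,2,25,8,21] : List (Fin 30)) *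
  List.formPerm ([11,20,15,7,13] : List (Fin 30)) *
  List.formPerm ([5,1,18] : List (Fin 30))

def pC : Equiv.Perm (Fin 30) :=
  List.formPerm ([0,13,14,7,12,26,9,25,2,5,19,1,22,8,15,27,10,28,4] : List (Fin 30)) *
  List.formPerm ([3,23,29,24,17,6,18] : List (Fin 30)) *
  List.formPerm ([11,16,20,21] : List (Fin 30))

lemma prod_eq_one : pA * pB * pC = 1 := by
  apply Equiv.ext
  decide

lemma sizesA : orbitSizes pA = ({12, 8, 4, 1, 1, 1, 1, 1, 1} : Multiset ℕ) := by
  rw [orbitSizes_eq_of_cycles pA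
    [[0,1,2,3,4,5,6,7,8,9,10,11],[12,13,14,15,16,17,18,19],[20,21,22,23],
     [24],[25],[26],[27],[28],[29]]
    (by decide) (by decide) (by decide) (by decide)]
  rfl

lemma sizesB : orbitSizes pB = ({6, 6, 5, 5, 5, 3} : Multiset ℕ) := by
  rw [orbitSizes_eq_of_cycles pB
    [[12,6,16,10,27,14],[0,3,17,24,29,22],[26,19,4,28,9],[23,2,25,8,21],
     [11,20,15,7,13],[5,1,18]]
    (by decide) (by decide) (by decide) (by decide)]
  rfl

lemma sizesC : orbitSizes pC = ({19, 7, 4} : Multiset ℕ) := by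
  rw [orbitSizes_eq_of_cycles pC
    [[0,13,14,7,12,26,9,25,2,5,19,1,22,8,15,27,10,28,4],[3,23,29,24,17,6,18],
     [11,16,20,21]]
    (by decide) (by decide) (by decide) (by decide)]
  rfl

/-- Realizability of the degree-30 branch-data triple
`[12, 8, 4, 1, 1, 1, 1, 1, 1]`, `[6, 6, 5, 5, 5, 3]`, `[19, 7, 4]`
by a transitive permutation triple with product the identity. -/
theorem realizable_triple_13 :
    ∃ σ₁ σ₂ σ₃ : Equiv.Perm (Fin 30),
      σ₁ * σ₂ * σ₃ = 1 ∧
      (∀ x y : Fin 30,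
        ∃ g ∈ Subgroup.closure ({σ₁, σ₂, σ₃} : Set (Equiv.Perm (Fin 30))), g x = y) ∧
      orbitSizes σ₁ = ({12, 8, 4, 1, 1, 1, 1, 1, 1} : Multiset ℕ) ∧
      orbitSizes σ₂ = ({6, 6, 5, 5, 5, 3} : Multiset ℕ) ∧
      orbitSizes σ₃ = ({19, 7, 4} : Multiset ℕ) := by
  refine ⟨pA, pB, pC, prod_eq_one, ?_, sizesA, sizesB, sizesC⟩
  set H := Subgroup.closure ({pA, pB, pC} : Set (Equiv.Perm (Fin 30))) with hH
  have hA : pA ∈ H := Subgroup.subset_closure (by simp)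
  have hB : pB ∈ H := Subgroup.subset_closure (by simp)
  have hC : pC ∈ H := Subgroup.subset_closure (by simp)
  set reach : Fin 30 → Prop := fun y => ∃ g ∈ H, g 0 = y with hreach
  have step1 : ∀ {x y : Fin 30}, reach x → pA x = y → reach y := by
    rintro x y ⟨g, hg, hgx⟩ rfl
    exact ⟨pA * g, mul_mem hA hg, by simp [Equiv.Perm.mul_apply, hgx]⟩
  have step2 : ∀ {x y : Fin 30}, reach x → pB x = y → reach y := by
    rintro x y ⟨g, hg, hgx⟩ rfl
    exact ⟨pB * g, mul_mem hB hg, by simp [Equiv.Perm.mul_apply, hgx]⟩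
  have step3 : ∀ {x y : Fin 30}, reach x → pC x = y → reach y := by
    rintro x y ⟨g, hg, hgx⟩ rfl
    exact ⟨pC * g, mul_mem hC hg, by simp [Equiv.Perm.mul_apply, hgx]⟩
  have hall : ∀ y : Fin 30, reach y := by
    have h0 : reach 0 := ⟨1, one_mem H, rfl⟩
    have h1 : reach 1 := step1 h0 (by decide)
    have h3 : reach 3 := step2 h0 (by decide)
    have h13 : reach 13 := step3 h0 (by decide)
    have h2 : reach 2 := step1 h1 (by decide)
    have h18 : reach 18 := step2 h1 (by decide)
    have h22 : reach 22 := step3 h1 (by decide)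
    have h4 : reach 4 := step1 h3 (by decide)
    have h17 : reach 17 := step2 h3 (by decide)
    have h23 : reach 23 := step3 h3 (by decide)
    have h14 : reach 14 := step1 h13 (by decide)
    have h11 : reach 11 := step2 h13 (by decide)
    have h25 : reach 25 := step2 h2 (by decide)
    have h5 : reach 5 := step3 h2 (by decide)
    have h19 : reach 19 := step1 h18 (by decide)
    have h8 : reach 8 := step3 h22 (by decide)
    have h28 : reach 28 := step2 h4 (by decide)
    have h24 : reach 24 := step2 h17 (by decide)
    have h6 : reach 6 := step3 h17 (by decide)
    have h20 : reach 20 := step1 h23 (by decide)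
    have h29 : reach 29 := step3 h23 (by decide)
    have h15 : reach 15 := step1 h14 (by decide)
    have h12 : reach 12 := step2 h14 (by decide)
    have h7 : reach 7 := step3 h14 (by decide)
    have h16 : reach 16 := step3 h11 (by decide)
    have h9 : reach 9 := step1 h8 (by decide)
    have h21 : reach 21 := step2 h8 (by decide)
    have h27 : reach 27 := step3 h15 (by decide)
    have h26 : reach 26 := step3 h12 (by decide)
    have h10 : reach 10 := step2 h16 (by decide)
    intro y
    fin_cases y <;> assumption
  intro x y
  obtain ⟨gx, hgx, hgx0⟩ := hall x
  obtain ⟨gy, hgy, hgy0⟩ := hall y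
  exact ⟨gy * gx⁻¹, mul_mem hgy (inv_mem hgx),
    by rw [Equiv.Perm.mul_apply, ← hgx0, (by simp : gx⁻¹ (gx 0) = 0), hgy0]⟩
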